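/- (Stability of tilted expectations in the prior parameter.) Let ν be a nonzero finite measure on [−1,1], Θ ⊆ ℝ^k, and ℓ : Θ × [−1,1] → ℝ a measurable function satisfying |ℓ(θ; b) − ℓ(θ'; b)| ≤ L‖θ − θ'‖ for all b ∈ [−1,1] and θ, θ' ∈ Θ. For t ∈ ℝ, d ≥ 0 and θ ∈ Θ, let μ_{t,θ} be the probability measure on [−1,1] with density proportional to b ↦ exp(t·b − d·b²/2 + ℓ(θ; b)) with respect to ν. Then for every measurable h : [−1,1] → [−1,1] and all θ, θ' ∈ Θ, |∫ h dμ_{t,θ} − ∫ h dμ_{t,θ'}| ≤ 2 e^{Lδ}(e^{Lδ} − 1), where δ := ‖θ − θ'‖; in particular the difference is at most C(L)·‖θ − θ'‖ whenever ‖θ − θ'‖ ≤ 1, with C(L) depending only on L. -/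

import Mathlib

open MeasureTheory ProbabilityTheory Real Filter
open scoped ENNReal

set_option maxHeartbeats 1000000

noncomputable section

/-- The tilted probability measure on `[−1,1]` with density (w.r.t. `ν`) proportional to
`b ↦ exp (t·b − d·b²/2 + ℓ θ b)`. -/
def tiltPrior {k : ℕ} (ν : Measure ℝ) (ℓ : EuclideanSpace ℝ (Fin k) → ℝ → ℝ)
    (t d : ℝ) (θ : EuclideanSpace ℝ (Fin k)) : Measure ℝ :=
  ((ν.withDensity fun b => ENNReal.ofReal (Real.exp (t * b - d * b ^ 2 / 2 + ℓ θ b)))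
      Set.univ)⁻¹ •
    ν.withDensity fun b => ENNReal.ofReal (Real.exp (t * b - d * b ^ 2 / 2 + ℓ θ b))

lemma aux_arith (c z z' p n p' n' : ℝ) (hc : 1 ≤ c) (hz : 0 < z) (hz' : 0 < z')
    (hp : 0 ≤ p) (hn : 0 ≤ n) (hp' : 0 ≤ p') (hn' : 0 ≤ n')
    (hpn' : p' + n' ≤ z')
    (hpc : p ≤ c * p') (hp'c : p' ≤ c * p)
    (hnc : n ≤ c * n') (hn'c : n' ≤ c * n)
    (hzc : z ≤ c * z') (hz'c : z' ≤ c * z) :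
    |z⁻¹ * (p - n) - z'⁻¹ * (p' - n')| ≤ 2 * c * (c - 1) := by
  have hc0 : (0:ℝ) < c := lt_of_lt_of_le one_pos hc
  have h1 : |p - p'| ≤ (c - 1) * p' := by
    rw [abs_sub_le_iff]
    constructor
    · nlinarith
    · nlinarith [mul_nonneg (sq_nonneg (c-1)) hp']
  have h2 : |n - n'| ≤ (c - 1) * n' := by
    rw [abs_sub_le_iff]
    constructor
    · nlinarith
    · nlinarith [mul_nonneg (sq_nonneg (c-1)) hn']
  have h3 : |z' - z| ≤ (c - 1) * z' := by
    rw [abs_sub_le_iff]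
    constructor
    · nlinarith [mul_nonneg (sq_nonneg (c-1)) hz'.le]
    · nlinarith
  have key : z⁻¹ * (p - n) - z'⁻¹ * (p' - n') =
      ((p - p') - (n - n'))/z + (p' - n') * (z' - z) / (z * z') := by
    field_simp
    ring
  rw [key]
  have A1 : |(p - p') - (n - n')| ≤ (c - 1) * z' := by
    calc |(p - p') - (n - n')| ≤ |p - p'| + |n - n'| := abs_sub _ _
      _ ≤ (c-1)*p' + (c-1)*n' := add_le_add h1 h2
      _ ≤ (c-1)*z' := by nlinarith [mul_le_mul_of_nonneg_left hpn' (sub_nonneg.2 hc)]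
  have e1 : |((p - p') - (n - n'))/z| ≤ c * (c-1) := by
    rw [abs_div, abs_of_pos hz, div_le_iff₀ hz]
    calc |(p-p') - (n-n')| ≤ (c-1)*z' := A1
      _ ≤ c*(c-1)*z := by nlinarith [mul_le_mul_of_nonneg_left hz'c (sub_nonneg.2 hc)]
  have e2 : |(p' - n') * (z' - z) / (z * z')| ≤ c * (c-1) := by
    rw [abs_div, abs_of_pos (mul_pos hz hz'), div_le_iff₀ (mul_pos hz hz'), abs_mul]
    have hA : |p' - n'| ≤ z' := by
      rw [abs_le]; constructor <;> nlinarith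
    calc |p' - n'| * |z' - z| ≤ z' * ((c-1)*z') :=
          mul_le_mul hA h3 (abs_nonneg _) (by nlinarith)
      _ ≤ c*(c-1)*(z*z') := by nlinarith [mul_le_mul_of_nonneg_left hz'c (mul_nonneg (sub_nonneg.2 hc) hz'.le)]
  calc |((p - p') - (n - n'))/z + (p' - n') * (z' - z) / (z * z')|
      ≤ |((p - p') - (n - n'))/z| + |(p' - n') * (z' - z) / (z * z')| := abs_add_le _ _
    _ ≤ c*(c-1) + c*(c-1) := add_le_add e1 e2
    _ = 2*c*(c-1) := by ring

lemma aux_exp (L δ : ℝ) (hL : 0 ≤ L) (hδ0 : 0 ≤ δ) (hδ1 : δ ≤ 1) :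
    2 * Real.exp (L*δ) * (Real.exp (L*δ) - 1) ≤ (2*L*Real.exp (2*L) + 1) * δ := by
  have h0 : Real.exp (-(L*δ)) * Real.exp (L*δ) = 1 := by
    rw [← Real.exp_add]; simp
  have h1 : Real.exp (L*δ) - 1 ≤ L*δ * Real.exp (L*δ) := by
    nlinarith [Real.add_one_le_exp (-(L*δ)), Real.exp_pos (L*δ)]
  have h2 : Real.exp (L*δ) ≤ Real.exp L := Real.exp_le_exp.2 (by nlinarith)
  have hsq : Real.exp L * Real.exp L = Real.exp (2*L) := by
    rw [← Real.exp_add]; ring_nf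
  have hx : 0 ≤ L*δ := mul_nonneg hL hδ0
  have hex : (1:ℝ) ≤ Real.exp (L*δ) := Real.one_le_exp hx
  nlinarith [mul_le_mul h2 h2 (Real.exp_pos (L*δ)).le (Real.exp_pos L).le,
    mul_nonneg hx (Real.exp_pos (L*δ)).le, Real.exp_pos (L*δ), Real.exp_pos L,
    mul_le_mul_of_nonneg_left h1 (le_of_lt (by positivity : (0:ℝ) < 2*Real.exp (L*δ)))]

/-- **Stability of tilted expectations in the prior parameter.**
For a nonzero finite measure `ν` on `[−1,1]` and `ℓ` Lipschitz in `θ` (with constant `L`,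
uniformly in `b ∈ [−1,1]`), the tilted expectations of any `[−1,1]`-valued measurable `h`
satisfy `|∫ h dμ_{t,θ} − ∫ h dμ_{t,θ'}| ≤ 2 e^{Lδ}(e^{Lδ} − 1)` with `δ = ‖θ − θ'‖`;
in particular the difference is at most `C(L)·‖θ − θ'‖` whenever `‖θ − θ'‖ ≤ 1`,
with `C(L)` depending only on `L`. -/
theorem stmt_10 (L : ℝ) (hL : 0 ≤ L) :
    ∃ Cl : ℝ, 0 < Cl ∧
      ∀ (k : ℕ) (Θs : Set (EuclideanSpace ℝ (Fin k))) (ν : Measure ℝ),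
        IsFiniteMeasure ν → ν ≠ 0 → ν (Set.Icc (-1 : ℝ) 1)ᶜ = 0 →
        ∀ ℓ : EuclideanSpace ℝ (Fin k) → ℝ → ℝ,
        (∀ b ∈ Set.Icc (-1 : ℝ) 1, ∀ θ ∈ Θs, ∀ θ' ∈ Θs, |ℓ θ b - ℓ θ' b| ≤ L * ‖θ - θ'‖) →
        ∀ t d : ℝ, 0 ≤ d →
        ∀ h : ℝ → ℝ, Measurable h → (∀ b : ℝ, h b ∈ Set.Icc (-1 : ℝ) 1) →
        ∀ θ ∈ Θs, ∀ θ' ∈ Θs,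
          (|∫ b, h b ∂(tiltPrior ν ℓ t d θ) - ∫ b, h b ∂(tiltPrior ν ℓ t d θ')|
              ≤ 2 * Real.exp (L * ‖θ - θ'‖) * (Real.exp (L * ‖θ - θ'‖) - 1)) ∧
          (‖θ - θ'‖ ≤ 1 →
            |∫ b, h b ∂(tiltPrior ν ℓ t d θ) - ∫ b, h b ∂(tiltPrior ν ℓ t d θ')|
              ≤ Cl * ‖θ - θ'‖) := by
  refine ⟨2*L*Real.exp (2*L) + 1, by positivity, ?_⟩
  intro k Θs ν hfin hν0 hνc ℓ hLip t d hd h hmeas hh θ hθ θ' hθ'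
  set δ := ‖θ - θ'‖ with hδdef
  have hδ0 : (0:ℝ) ≤ δ := norm_nonneg _
  set cr := Real.exp (L * δ) with hcrdef
  have hcr1 : (1:ℝ) ≤ cr := Real.one_le_exp (mul_nonneg hL hδ0)
  have hcr0 : (0:ℝ) < cr := lt_of_lt_of_le one_pos hcr1
  set c : ℝ≥0∞ := ENNReal.ofReal cr with hcdef
  have hcne : c ≠ ∞ := ENNReal.ofReal_ne_top
  set f : EuclideanSpace ℝ (Fin k) → ℝ → ℝ≥0∞ :=
    fun ϑ b => ENNReal.ofReal (Real.exp (t * b - d * b ^ 2 / 2 + ℓ ϑ b)) with hfdef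
  set W : EuclideanSpace ℝ (Fin k) → Measure ℝ := fun ϑ => ν.withDensity (f ϑ) with hWdef
  set Z : EuclideanSpace ℝ (Fin k) → ℝ≥0∞ := fun ϑ => W ϑ Set.univ with hZdef
  have tilt_eq : ∀ ϑ, tiltPrior ν ℓ t d ϑ = (Z ϑ)⁻¹ • W ϑ := fun ϑ => rfl
  have hIcc : ∀ᵐ b ∂ν, b ∈ Set.Icc (-1:ℝ) 1 := by
    rw [ae_iff]
    simpa [Set.compl_def] using hνc
  -- domination
  have dom : ∀ θ₁ ∈ Θs, ∀ θ₂ ∈ Θs, ‖θ₁ - θ₂‖ = δ → W θ₁ ≤ c • W θ₂ := by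
    intro θ₁ h₁ θ₂ h₂ hnrm
    refine Measure.le_iff.mpr fun A hA => ?_
    rw [hWdef]
    simp only
    rw [withDensity_apply _ hA, Measure.smul_apply, withDensity_apply _ hA,
        smul_eq_mul, ← lintegral_const_mul' _ _ hcne]
    refine lintegral_mono_ae ?_
    filter_upwards [ae_restrict_of_ae hIcc] with b hb
    have hℓ := hLip b hb θ₁ h₁ θ₂ h₂
    rw [hnrm] at hℓ
    have hle : Real.exp (t*b - d*b^2/2 + ℓ θ₁ b)
        ≤ cr * Real.exp (t*b - d*b^2/2 + ℓ θ₂ b) := by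
      rw [hcrdef, ← Real.exp_add, Real.exp_le_exp]
      have := (abs_le.mp hℓ).2
      linarith
    calc f θ₁ b ≤ ENNReal.ofReal (cr * Real.exp (t*b - d*b^2/2 + ℓ θ₂ b)) :=
          ENNReal.ofReal_le_ofReal hle
      _ = c * f θ₂ b := by rw [ENNReal.ofReal_mul hcr0.le]
  have dom1 : W θ ≤ c • W θ' := dom θ hθ θ' hθ' rfl
  have dom2 : W θ' ≤ c • W θ := dom θ' hθ' θ hθ ((norm_sub_rev θ' θ).trans hδdef.symm)
  have hcomp1 : ∀ g : ℝ → ℝ≥0∞, (∫⁻ b, g b ∂(W θ)) ≤ c * ∫⁻ b, g b ∂(W θ') := fun g =>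
    calc (∫⁻ b, g b ∂(W θ)) ≤ ∫⁻ b, g b ∂(c • W θ') := lintegral_mono' dom1 le_rfl
      _ = c * ∫⁻ b, g b ∂(W θ') := lintegral_smul_measure _ _
  have hcomp2 : ∀ g : ℝ → ℝ≥0∞, (∫⁻ b, g b ∂(W θ')) ≤ c * ∫⁻ b, g b ∂(W θ) := fun g =>
    calc (∫⁻ b, g b ∂(W θ')) ≤ ∫⁻ b, g b ∂(c • W θ) := lintegral_mono' dom2 le_rfl
      _ = c * ∫⁻ b, g b ∂(W θ) := lintegral_smul_measure _ _
  have hZ1 : Z θ ≤ c * Z θ' := by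
    have := Measure.le_iff'.mp dom1 Set.univ
    simpa [hZdef, Measure.smul_apply, smul_eq_mul] using this
  have hZ2 : Z θ' ≤ c * Z θ := by
    have := Measure.le_iff'.mp dom2 Set.univ
    simpa [hZdef, Measure.smul_apply, smul_eq_mul] using this
  -- main bound
  have main : |∫ b, h b ∂(tiltPrior ν ℓ t d θ) - ∫ b, h b ∂(tiltPrior ν ℓ t d θ')|
      ≤ 2 * cr * (cr - 1) := by
    rcases eq_or_ne (Z θ) 0 with hZ0 | hZ0
    · have hZ'0 : Z θ' = 0 := by
        have := hZ2
        rw [hZ0, mul_zero] at this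
        exact le_antisymm this zero_le
      have e1 : tiltPrior ν ℓ t d θ = 0 := by
        rw [tilt_eq, Measure.measure_univ_eq_zero.mp hZ0, smul_zero]
      have e2 : tiltPrior ν ℓ t d θ' = 0 := by
        rw [tilt_eq, Measure.measure_univ_eq_zero.mp hZ'0, smul_zero]
      rw [e1, e2]
      simp only [integral_zero_measure, sub_zero, abs_zero]
      nlinarith
    rcases eq_or_ne (Z θ) ∞ with hZt | hZt
    · have hZ't : Z θ' = ∞ := by
        by_contra hne
        exact (ENNReal.mul_ne_top hcne hne) (top_le_iff.mp (hZt ▸ hZ1))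
      have e1 : tiltPrior ν ℓ t d θ = 0 := by
        rw [tilt_eq, hZt, ENNReal.inv_top, zero_smul]
      have e2 : tiltPrior ν ℓ t d θ' = 0 := by
        rw [tilt_eq, hZ't, ENNReal.inv_top, zero_smul]
      rw [e1, e2]
      simp only [integral_zero_measure, sub_zero, abs_zero]
      nlinarith
    -- nondegenerate case
    have hZ'0 : Z θ' ≠ 0 := by
      intro hz
      rw [hz, mul_zero] at hZ1
      exact hZ0 (le_antisymm hZ1 zero_le)
    have hZ't : Z θ' ≠ ∞ := by
      intro hz
      exact (ENNReal.mul_ne_top hcne hZt) (top_le_iff.mp (hz ▸ hZ2))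
    have repr : ∀ ϑ, Z ϑ ≠ ∞ → ∫ b, h b ∂(tiltPrior ν ℓ t d ϑ) =
        (Z ϑ).toReal⁻¹ * ((∫⁻ b, ENNReal.ofReal (h b) ∂(W ϑ)).toReal
          - (∫⁻ b, ENNReal.ofReal (-(h b)) ∂(W ϑ)).toReal) := by
      intro ϑ hϑ
      have : IsFiniteMeasure (W ϑ) := ⟨hϑ.lt_top⟩
      have hintϑ : Integrable h (W ϑ) := by
        refine Integrable.mono' (integrable_const 1) hmeas.aestronglyMeasurable
          (ae_of_all _ fun b => ?_)
        rw [Real.norm_eq_abs, abs_le]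
        exact ⟨(hh b).1, (hh b).2⟩
      rw [tilt_eq, integral_smul_measure,
        integral_eq_lintegral_pos_part_sub_lintegral_neg_part hintϑ,
        ENNReal.toReal_inv, smul_eq_mul]
    have hsum : ∀ ϑ, (∫⁻ b, ENNReal.ofReal (h b) ∂(W ϑ))
        + (∫⁻ b, ENNReal.ofReal (-(h b)) ∂(W ϑ)) ≤ Z ϑ := by
      intro ϑ
      rw [← lintegral_add_left (hmeas.ennreal_ofReal)]
      calc (∫⁻ b, (ENNReal.ofReal (h b) + ENNReal.ofReal (-(h b))) ∂(W ϑ))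
          ≤ ∫⁻ _, 1 ∂(W ϑ) := by
            refine lintegral_mono fun b => ?_
            rcases le_total (h b) 0 with hb0 | hb0
            · simp only [ENNReal.ofReal_eq_zero.mpr hb0, zero_add]
              exact ENNReal.ofReal_le_one.mpr (by linarith [(hh b).1])
            · simp only [ENNReal.ofReal_eq_zero.mpr (neg_nonpos.mpr hb0), add_zero]
              exact ENNReal.ofReal_le_one.mpr (hh b).2
        _ = Z ϑ := by rw [lintegral_one]
    set P := ∫⁻ b, ENNReal.ofReal (h b) ∂(W θ) with hPdef
    set N := ∫⁻ b, ENNReal.ofReal (-(h b)) ∂(W θ) with hNdef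
    set P' := ∫⁻ b, ENNReal.ofReal (h b) ∂(W θ') with hP'def
    set N' := ∫⁻ b, ENNReal.ofReal (-(h b)) ∂(W θ') with hN'def
    have hPtop : P ≠ ∞ := ne_top_of_le_ne_top hZt (le_trans le_self_add (hsum θ))
    have hNtop : N ≠ ∞ := ne_top_of_le_ne_top hZt (le_trans le_add_self (hsum θ))
    have hP'top : P' ≠ ∞ := ne_top_of_le_ne_top hZ't (le_trans le_self_add (hsum θ'))
    have hN'top : N' ≠ ∞ := ne_top_of_le_ne_top hZ't (le_trans le_add_self (hsum θ'))
    have toReal_le : ∀ {a b : ℝ≥0∞}, b ≠ ∞ → a ≤ c * b → a.toReal ≤ cr * b.toReal := by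
      intro a b hb hab
      have := ENNReal.toReal_mono (ENNReal.mul_ne_top hcne hb) hab
      rwa [ENNReal.toReal_mul, hcdef, ENNReal.toReal_ofReal hcr0.le] at this
    rw [repr θ hZt, repr θ' hZ't]
    refine aux_arith cr (Z θ).toReal (Z θ').toReal P.toReal N.toReal P'.toReal N'.toReal
      hcr1 (ENNReal.toReal_pos hZ0 hZt) (ENNReal.toReal_pos hZ'0 hZ't)
      ENNReal.toReal_nonneg ENNReal.toReal_nonneg ENNReal.toReal_nonneg ENNReal.toReal_nonneg
      ?_ (toReal_le hP'top (hcomp1 _)) (toReal_le hPtop (hcomp2 _))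
      (toReal_le hN'top (hcomp1 _)) (toReal_le hNtop (hcomp2 _))
      (toReal_le hZ't hZ1) (toReal_le hZt hZ2)
    have := ENNReal.toReal_mono hZ't (hsum θ')
    rwa [ENNReal.toReal_add hP'top hN'top] at this
  exact ⟨main, fun hδ1 => main.trans (aux_exp L δ hL hδ0 hδ1)⟩
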